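/- Let O ⊂ A be an extension of Dedekind domains with A the integral closure of O in a finite separable extension K of the fraction field F of O. Define D_{A/O} = {x ∈ A⊗_O A : (a⊗1)x = (1⊗a)x for all a ∈ A}. Then the multiplication map m : A⊗_O A → A restricts to an isomorphism of A-modules D_{A/O} ≅ d_{A/O}, where d_{A/O} is the relative different ideal. -/

import Mathlib

open TensorProduct

set_option maxHeartbeats 1600000

/-- A finite torsion-free module over a Dedekind domain is projective. -/
theorem projective_of_dedekind (O M : Type*) [CommRing O] [IsDomain O] [IsDedekindDomain O]
    [AddCommGroup M] [Module O M] [Module.Finite O M] [NoZeroSMulDivisors O M] :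
    Module.Projective O M := by
  by_cases hO : IsField O
  · letI := hO.toField
    infer_instance
  · haveI : Module.FinitePresentation O M :=
      Module.finitePresentation_of_finite O M
    apply Module.projective_of_localization_maximal
    intro P hP
    have hPbot : P ≠ ⊥ := Ring.ne_bot_of_isMaximal_of_not_isField hP hO
    haveI : IsDomain (Localization.AtPrime P) :=
      IsLocalization.isDomain_localization P.primeCompl_le_nonZeroDivisors
    haveI : IsDiscreteValuationRing (Localization.AtPrime P) :=
      IsLocalization.AtPrime.isDiscreteValuationRing_of_dedekind_domain O hPbot _
    haveI : Module.Finite (Localization.AtPrime P) (LocalizedModule P.primeCompl M) :=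
      Module.Finite.of_isLocalizedModule P.primeCompl (LocalizedModule.mkLinearMap P.primeCompl M)
    haveI : NoZeroSMulDivisors (Localization.AtPrime P) (LocalizedModule P.primeCompl M) := by
      refine ⟨fun {c x} hcx => ?_⟩
      induction c using Localization.induction_on with
      | H y =>
        obtain ⟨r, s⟩ := y
        induction x using LocalizedModule.induction_on with
        | h m t =>
          rw [LocalizedModule.mk_smul_mk] at hcx
          rw [show (0 : LocalizedModule P.primeCompl M) = LocalizedModule.mk 0 1 from
            (LocalizedModule.zero_mk 1).symm, LocalizedModule.mk_eq] at hcx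
          obtain ⟨u, hu⟩ := hcx
          simp only [smul_zero, one_smul] at hu
          have hu' : ((u : O) * r) • m = 0 := by
            rw [mul_smul]; exact hu
          rcases smul_eq_zero.mp hu' with h | h
          · rcases mul_eq_zero.mp h with h' | h'
            · exact absurd (h' ▸ u.2) (by simp [Ideal.primeCompl])
            · left; rw [h', Localization.mk_zero]
          · right; rw [h, LocalizedModule.zero_mk]
    haveI : Module.Free (Localization.AtPrime P) (LocalizedModule P.primeCompl M) :=
      Module.free_of_finite_type_torsion_free'
    infer_instance

/-- Finite projective modules admit a finite "dual basis" family. -/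
theorem dualFamily (R M : Type*) [CommRing R] [AddCommGroup M] [Module R M]
    [Module.Finite R M] [Module.Projective R M] :
    ∃ (n : ℕ) (a : Fin n → M) (f : Fin n → (M →ₗ[R] R)),
      ∀ x : M, ∑ j, f j x • a j = x := by
  obtain ⟨n, g, hg⟩ := Module.Finite.exists_fin (R := R) (M := M)
  let π : (Fin n →₀ R) →ₗ[R] M := Finsupp.linearCombination R g
  have hπ : Function.Surjective π := by
    rw [← LinearMap.range_eq_top, Finsupp.range_linearCombination, hg]
  obtain ⟨σ, hσ⟩ := Module.projective_lifting_property π LinearMap.id hπ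
  refine ⟨n, g, fun j => (Finsupp.lapply j) ∘ₗ σ, fun x => ?_⟩
  have h1 : π (σ x) = x := by
    have := LinearMap.congr_fun hσ x; simpa using this
  have h2 : ∑ j, (σ x) j • g j = x := by
    conv_rhs => rw [← h1]
    rw [Finsupp.linearCombination_apply, Finsupp.sum_fintype]
    intro i; exact zero_smul R (g i)
  simpa [Finsupp.lapply] using h2

/-- The `A`-submodule `D_{A/O} = {x ∈ A ⊗[O] A | ∀ a, (a ⊗ 1)·x = (1 ⊗ a)·x}` of `A ⊗[O] A`
(where `A` acts through the left tensor factor). -/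
def Dsub (O A : Type*) [CommRing O] [CommRing A] [Algebra O A] :
    Submodule A (A ⊗[O] A) where
  carrier := {x | ∀ a : A, a • x = ((1 : A) ⊗ₜ[O] a) * x}
  add_mem' := fun hx hy a => by rw [smul_add, hx a, hy a, mul_add]
  zero_mem' := fun a => by rw [smul_zero, mul_zero]
  smul_mem' := fun c x hx => fun a => by rw [smul_comm, hx a, mul_smul_comm]

/-- for `A` the integral closure of the Dedekind domain `O` in a finite separable
extension `K` of `F = Frac O`, the multiplication map `A ⊗[O] A → A` restricts to an
`A`-module isomorphism `D_{A/O} ≅ d_{A/O}`, the relative different ideal. -/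
theorem stmt3 (O A F K : Type*)
    [CommRing O] [IsDomain O] [IsDedekindDomain O]
    [CommRing A] [IsDomain A] [IsDedekindDomain A]
    [Algebra O A] [NoZeroSMulDivisors O A]
    [Field F] [Field K]
    [Algebra O F] [IsFractionRing O F]
    [Algebra A K] [IsFractionRing A K]
    [Algebra F K] [Algebra O K]
    [IsScalarTower O F K] [IsScalarTower O A K]
    [FiniteDimensional F K] [Algebra.IsSeparable F K]
    [IsIntegralClosure A O K] :
    ∃ e : (Dsub O A) ≃ₗ[A] (differentIdeal O A),
      ∀ x : Dsub O A, (e x : A) = LinearMap.mul' O A x.1 := by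
  classical
  let toK : A →ₗ[O] K := (IsScalarTower.toAlgHom O A K).toLinearMap
  have htoK : ∀ x : A, toK x = algebraMap A K x := fun _ => rfl
  have hKinj : Function.Injective (algebraMap A K) := IsFractionRing.injective A K
  haveI hfin : Module.Finite O A := IsIntegralClosure.finite O F K A
  haveI hproj : Module.Projective O A := projective_of_dedekind O A
  haveI hlocmod : IsLocalizedModule (nonZeroDivisors O) toK := by
    rw [show toK = (IsScalarTower.toAlgHom O A K).toLinearMap from rfl,
      isLocalizedModule_iff_isLocalization]
    exact IsIntegralClosure.isLocalization O F K A
  haveI hcs1 : CompatibleSMul O F K K :=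
    IsLocalization.tensorProduct_compatibleSMul (nonZeroDivisors O) F K K
  haveI hcs2 : CompatibleSMul F O K K := ⟨fun a m n => by
    rw [← algebraMap_smul F a m, ← algebraMap_smul F a n, smul_tmul]⟩
  obtain ⟨n, a, f, hf⟩ := dualFamily O A
  have hden : ∀ w : K, ∃ (p : A) (d : nonZeroDivisors O), (d : O) • w = toK p := by
    intro w
    obtain ⟨⟨p, d⟩, h⟩ := IsLocalizedModule.surj (nonZeroDivisors O) toK w
    exact ⟨p, d, h⟩
  have halgne : ∀ d : nonZeroDivisors O, (algebraMap O F d : F) ≠ 0 := fun d =>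
    IsFractionRing.to_map_ne_zero_of_mem_nonZeroDivisors d.2
  have nd := traceForm_nondegenerate F K
  set τ : K ≃ₗ[F] Module.Dual F K := (Algebra.traceForm F K).toDual nd with hτdef
  have hτ : ∀ (u w : K), τ u w = Algebra.trace F K (u * w) := by
    intro u w
    rw [hτdef, LinearMap.BilinForm.toDual_def, Algebra.traceForm_apply]
  have hbc : IsBaseChange F toK := IsLocalizedModule.isBaseChange (nonZeroDivisors O) F toK
  let φ : Fin n → (K →ₗ[F] F) := fun j => hbc.lift ((Algebra.linearMap O F) ∘ₗ f j)
  have hφ : ∀ (j) (x : A), φ j (toK x) = algebraMap O F (f j x) := fun j x => hbc.lift_eq _ x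
  let c : Fin n → K := fun j => τ.symm (φ j)
  have hc : ∀ (j) (w : K), Algebra.trace F K (c j * w) = φ j w := by
    intro j w
    rw [← hτ, show τ (c j) = φ j from τ.apply_symm_apply _]
  -- the reproducing property
  have hrepr : ∀ w : K, ∑ j, Algebra.trace F K (c j * w) • toK (a j) = w := by
    have hO : ∀ x : A, ∑ j, Algebra.trace F K (c j * toK x) • toK (a j) = toK x := by
      intro x
      have h1 : ∀ j, Algebra.trace F K (c j * toK x) • toK (a j) = toK (f j x • a j) := by
        intro j
        rw [hc, hφ, algebraMap_smul, ← map_smul]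
      rw [Finset.sum_congr rfl (fun j _ => h1 j), ← map_sum, hf]
    intro w
    obtain ⟨p, d, hd⟩ := hden w
    have hdw : (algebraMap O F d) • w = toK p := by rw [algebraMap_smul]; exact hd
    have h2 := hO p
    rw [← hdw] at h2
    have hlin : ∑ j, Algebra.trace F K (c j * ((algebraMap O F d) • w)) • toK (a j)
        = (algebraMap O F d) • ∑ j, Algebra.trace F K (c j * w) • toK (a j) := by
      rw [Finset.smul_sum]
      refine Finset.sum_congr rfl fun j _ => ?_
      rw [mul_smul_comm, map_smul, smul_eq_mul, mul_smul]
    rw [hlin] at h2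
    exact smul_right_injective K (halgne d) h2
  -- the map Ψ
  let Ψ : K ⊗[F] K →ₗ[F] (K →ₗ[F] K) :=
    (dualTensorHom F K K) ∘ₗ (TensorProduct.map τ.toLinearMap LinearMap.id)
  have hΨt : ∀ (u v w : K), Ψ (u ⊗ₜ[F] v) w = Algebra.trace F K (u * w) • v := by
    intro u v w
    simp only [Ψ, LinearMap.coe_comp, Function.comp_apply, TensorProduct.map_tmul,
      dualTensorHom_apply, LinearMap.id_coe, id_eq, LinearEquiv.coe_coe]
    rw [hτ]
  have hΨinj : Function.Injective Ψ := by
    have h1 : Function.Injective (TensorProduct.map τ.toLinearMap (LinearMap.id : K →ₗ[F] K)) := by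
      have h : TensorProduct.map τ.toLinearMap (LinearMap.id : K →ₗ[F] K)
          = (TensorProduct.congr τ (LinearEquiv.refl F K)).toLinearMap := rfl
      rw [h]
      exact (TensorProduct.congr τ (LinearEquiv.refl F K)).injective
    have h2 : Function.Injective (dualTensorHom F K K) := by
      let b := Module.Free.chooseBasis F K
      rw [← dualTensorHomEquivOfBasis_toLinearMap (b := b)]
      exact (dualTensorHomEquivOfBasis b).injective
    exact h2.comp h1
  have hML : ∀ (u : K) (x : K ⊗[F] K) (w : K), Ψ ((u ⊗ₜ[F] (1 : K)) * x) w = Ψ x (u * w) := by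
    intro u x w
    induction x using TensorProduct.induction_on with
    | zero => simp
    | tmul p q =>
      rw [Algebra.TensorProduct.tmul_mul_tmul, hΨt, hΨt, one_mul]
      congr 1
      rw [show u * p * w = p * (u * w) by ring]
    | add y z hy hz =>
      rw [mul_add, map_add, LinearMap.add_apply, hy, hz, map_add, LinearMap.add_apply]
  have hMR : ∀ (u : K) (x : K ⊗[F] K) (w : K), Ψ (((1 : K) ⊗ₜ[F] u) * x) w = u * Ψ x w := by
    intro u x w
    induction x using TensorProduct.induction_on with
    | zero => simp
    | tmul p q =>
      rw [Algebra.TensorProduct.tmul_mul_tmul, hΨt, hΨt, one_mul, mul_smul_comm]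
    | add y z hy hz =>
      rw [mul_add, map_add, LinearMap.add_apply, hy, hz, map_add, LinearMap.add_apply, mul_add]
  -- the separability idempotent e
  set E : K ⊗[F] K := ∑ j, c j ⊗ₜ[F] toK (a j) with hEdef
  have hΨE : ∀ w, Ψ E w = w := by
    intro w
    rw [hEdef, map_sum, LinearMap.sum_apply,
      Finset.sum_congr rfl (fun j _ => hΨt (c j) (toK (a j)) w)]
    exact hrepr w
  have hdiag : ∀ u : K, (u ⊗ₜ[F] (1 : K)) * E = ((1 : K) ⊗ₜ[F] u) * E := by
    intro u
    apply hΨinj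
    apply LinearMap.ext
    intro w
    rw [hML, hMR, hΨE, hΨE]
  have hmul'L : ∀ (u v : K) (x : K ⊗[F] K),
      LinearMap.mul' F K ((u ⊗ₜ[F] v) * x) = u * v * LinearMap.mul' F K x := by
    intro u v x
    induction x using TensorProduct.induction_on with
    | zero => simp
    | tmul p q =>
      rw [Algebra.TensorProduct.tmul_mul_tmul, LinearMap.mul'_apply, LinearMap.mul'_apply]
      ring
    | add y z hy hz => rw [mul_add, map_add, hy, hz, map_add, mul_add]
  have htr : ∀ x : K ⊗[F] K,
      LinearMap.trace F K (Ψ x) = Algebra.trace F K (LinearMap.mul' F K x) := by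
    intro x
    induction x using TensorProduct.induction_on with
    | zero => simp
    | tmul u v =>
      have h1 : Ψ (u ⊗ₜ[F] v) = dualTensorHom F K K ((τ u) ⊗ₜ[F] v) := rfl
      have h2 := LinearMap.congr_fun (LinearMap.trace_eq_contract F K) ((τ u) ⊗ₜ[F] v)
      rw [LinearMap.comp_apply] at h2
      rw [h1, h2, contractLeft_apply, LinearMap.mul'_apply, hτ]
    | add y z hy hz => rw [map_add, map_add, hy, hz, map_add, map_add]
  have hmE : LinearMap.mul' F K E = 1 := by
    have h0 : ∀ w : K, Algebra.traceForm F K (LinearMap.mul' F K E - 1) w = 0 := by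
      intro w
      have h1 : Ψ (((1 : K) ⊗ₜ[F] w) * E) = Algebra.lmul F K w := by
        apply LinearMap.ext
        intro w'
        rw [hMR, hΨE]
        rfl
      have h2 := htr (((1 : K) ⊗ₜ[F] w) * E)
      rw [h1, hmul'L, one_mul] at h2
      have h3 : Algebra.trace F K w = Algebra.trace F K (w * LinearMap.mul' F K E) := by
        rw [Algebra.trace_apply, h2]
      rw [Algebra.traceForm_apply, sub_mul, one_mul, map_sub, mul_comm, ← h3, sub_self]
    have h4 := nd.1 _ h0
    exact sub_eq_zero.mp h4
  -- the embedding Θ : A ⊗[O] A → K ⊗[F] K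
  let Θbil : A →ₗ[O] A →ₗ[O] (K ⊗[F] K) := LinearMap.mk₂ O (fun x y => toK x ⊗ₜ[F] toK y)
    (fun x x' y => by
      show toK (x + x') ⊗ₜ[F] toK y = toK x ⊗ₜ[F] toK y + toK x' ⊗ₜ[F] toK y
      rw [map_add, TensorProduct.add_tmul])
    (fun r x y => by
      show toK (r • x) ⊗ₜ[F] toK y = r • (toK x ⊗ₜ[F] toK y)
      rw [map_smul, TensorProduct.smul_tmul'])
    (fun x y y' => by
      show toK x ⊗ₜ[F] toK (y + y') = toK x ⊗ₜ[F] toK y + toK x ⊗ₜ[F] toK y'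
      rw [map_add, TensorProduct.tmul_add])
    (fun r x y => by
      show toK x ⊗ₜ[F] toK (r • y) = r • (toK x ⊗ₜ[F] toK y)
      rw [map_smul, ← TensorProduct.smul_tmul, TensorProduct.smul_tmul'])
  let Θ : A ⊗[O] A →ₗ[O] K ⊗[F] K := TensorProduct.lift Θbil
  have hΘt : ∀ (x y : A), Θ (x ⊗ₜ[O] y) = toK x ⊗ₜ[F] toK y := fun x y => rfl
  have hΘinj : Function.Injective Θ := by
    haveI : Module.Flat O F := IsLocalization.flat F (nonZeroDivisors O)
    haveI : Module.Flat O K := Module.Flat.trans O F K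
    have hinj : Function.Injective toK := fun x y h => hKinj h
    have h1 : Function.Injective (LinearMap.lTensor A toK) :=
      Module.Flat.lTensor_preserves_injective_linearMap toK hinj
    have h2 : Function.Injective (LinearMap.rTensor K toK) :=
      Module.Flat.rTensor_preserves_injective_linearMap toK hinj
    have key : Θ = (TensorProduct.equivOfCompatibleSMul F O O K K).toLinearMap ∘ₗ
        ((LinearMap.rTensor K toK) ∘ₗ (LinearMap.lTensor A toK)) := by
      apply TensorProduct.ext'
      intro x y
      rw [hΘt]
      simp only [LinearMap.coe_comp, Function.comp_apply, LinearMap.lTensor_tmul,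
        LinearMap.rTensor_tmul, LinearEquiv.coe_coe]
      rfl
    rw [key]
    simp only [LinearMap.coe_comp, LinearEquiv.coe_coe]
    exact (TensorProduct.equivOfCompatibleSMul F O O K K).injective.comp (h2.comp h1)
  have hΘmul : ∀ (p q : A) (z : A ⊗[O] A),
      Θ ((p ⊗ₜ[O] q) * z) = (toK p ⊗ₜ[F] toK q) * Θ z := by
    intro p q z
    induction z using TensorProduct.induction_on with
    | zero => rw [mul_zero, map_zero, mul_zero]
    | tmul x y =>
      rw [Algebra.TensorProduct.tmul_mul_tmul, hΘt, hΘt, Algebra.TensorProduct.tmul_mul_tmul,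
        htoK, htoK, htoK, htoK, htoK, htoK, ← map_mul, ← map_mul]
    | add y z hy hz => rw [mul_add, map_add, hy, hz, map_add, mul_add]
  have hΘsmul : ∀ (p : A) (z : A ⊗[O] A), Θ (p • z) = (toK p ⊗ₜ[F] (1 : K)) * Θ z := by
    intro p z
    induction z using TensorProduct.induction_on with
    | zero => rw [smul_zero, map_zero, mul_zero]
    | tmul x y =>
      rw [TensorProduct.smul_tmul', hΘt, hΘt, Algebra.TensorProduct.tmul_mul_tmul, one_mul,
        smul_eq_mul, htoK, htoK, htoK, htoK, ← map_mul]
    | add y z hy hz => rw [smul_add, map_add, hy, hz, map_add, mul_add]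
  have hΘmul' : ∀ z : A ⊗[O] A, toK (LinearMap.mul' O A z) = LinearMap.mul' F K (Θ z) := by
    intro z
    induction z using TensorProduct.induction_on with
    | zero => simp only [map_zero]
    | tmul x y =>
      rw [LinearMap.mul'_apply, hΘt, LinearMap.mul'_apply, htoK, htoK, htoK, map_mul]
    | add y z hy hz => rw [map_add, map_add, hy, hz, map_add, map_add]
  -- Dsub elements have diagonal image
  have hdiagz : ∀ z : A ⊗[O] A, z ∈ Dsub O A →
      ∀ u : K, (u ⊗ₜ[F] (1 : K)) * Θ z = ((1 : K) ⊗ₜ[F] u) * Θ z := by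
    intro z hz u
    obtain ⟨p, d, hd⟩ := hden u
    have hdu : toK p = (algebraMap O F d) • u := by rw [algebraMap_smul]; exact hd.symm
    have hA : (toK p ⊗ₜ[F] (1 : K)) * Θ z = ((1 : K) ⊗ₜ[F] toK p) * Θ z := by
      have h1 : Θ (p • z) = Θ (((1 : A) ⊗ₜ[O] p) * z) := by rw [hz p]
      rw [hΘsmul, hΘmul] at h1
      have h2 : toK (1 : A) = (1 : K) := by rw [htoK, map_one]
      rw [h2] at h1
      exact h1
    rw [hdu] at hA
    have hL : (((algebraMap O F d) • u) ⊗ₜ[F] (1 : K)) = (algebraMap O F d) • (u ⊗ₜ[F] (1 : K)) :=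
      (TensorProduct.smul_tmul' _ _ _).symm
    have hR : ((1 : K) ⊗ₜ[F] ((algebraMap O F d) • u)) = (algebraMap O F d) • ((1 : K) ⊗ₜ[F] u) := by
      rw [← TensorProduct.smul_tmul, TensorProduct.smul_tmul']
    rw [hL, hR, smul_mul_assoc, smul_mul_assoc] at hA
    exact smul_right_injective _ (halgne d) hA
  -- the multiplication map lands in the different ideal
  have honemem : ∀ p : A, toK p ∈ (1 : Submodule A K) := by
    intro p
    rw [Submodule.one_eq_range]
    exact ⟨p, rfl⟩
  have hcdual : ∀ j, c j ∈ Submodule.traceDual O F (1 : Submodule A K) := by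
    intro j
    rw [Submodule.mem_traceDual]
    intro x hx
    rw [Submodule.one_eq_range] at hx
    obtain ⟨p, rfl⟩ := hx
    refine ⟨f j p, ?_⟩
    have h1 : Algebra.traceForm F K (c j) (Algebra.linearMap A K p) = Algebra.trace F K (c j * toK p) := by
      rw [Algebra.traceForm_apply]; rfl
    rw [h1, hc j, hφ j p]
  -- structure of diagonal elements of K ⊗ K
  have hkey : ∀ x : K ⊗[F] K, (∀ u : K, (u ⊗ₜ[F] (1 : K)) * x = ((1 : K) ⊗ₜ[F] u) * x) →
      x = ((1 : K) ⊗ₜ[F] (LinearMap.mul' F K x)) * E := by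
    intro x hx
    have h1 : x = ((1 : K) ⊗ₜ[F] (Ψ x 1)) * E := by
      apply hΨinj
      apply LinearMap.ext
      intro w
      have h2 : Ψ x w = w * Ψ x 1 := by
        have h3 : Ψ ((w ⊗ₜ[F] (1 : K)) * x) 1 = Ψ x (w * 1) := hML w x 1
        rw [hx w, hMR, mul_one] at h3
        exact h3.symm
      rw [h2, hMR, hΨE, mul_comm]
    have h4 : LinearMap.mul' F K x = Ψ x 1 := by
      conv_lhs => rw [h1]
      rw [hmul'L, one_mul, hmE, mul_one]
    rw [h4]
    exact h1
  -- the multiplication map lands in the different ideal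
  have hmem : ∀ z : A ⊗[O] A, z ∈ Dsub O A → LinearMap.mul' O A z ∈ differentIdeal O A := by
    intro z hz
    have hx := hkey (Θ z) (hdiagz z hz)
    have hΨmem : ∀ y : K, y ∈ Submodule.traceDual O F (1 : Submodule A K) →
        ∀ z' : A ⊗[O] A, Ψ (Θ z') y ∈ (1 : Submodule A K) := by
      intro y hy z'
      induction z' using TensorProduct.induction_on with
      | zero =>
        simp only [map_zero, LinearMap.zero_apply]
        exact Submodule.zero_mem _
      | tmul p q =>
        rw [hΘt, hΨt]
        rw [Submodule.mem_traceDual] at hy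
        obtain ⟨r, hr⟩ := hy (toK p) (honemem p)
        have h5 : Algebra.trace F K (toK p * y) = algebraMap O F r := by
          rw [mul_comm (toK p) y, ← Algebra.traceForm_apply]
          exact hr.symm
        have h6 : (algebraMap O F r) • toK q = toK (r • q) := by
          rw [map_smul, algebraMap_smul]
        rw [h5, h6]
        exact honemem _
      | add u v hu hv =>
        rw [map_add, map_add, LinearMap.add_apply]
        exact Submodule.add_mem _ hu hv
    have hy : ∀ y ∈ Submodule.traceDual O F (1 : Submodule A K),
        (algebraMap A K (LinearMap.mul' O A z)) * y ∈ (1 : Submodule A K) := by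
      intro y hyd
      have h7 := hΨmem y hyd z
      have h8 : Ψ (Θ z) y = (LinearMap.mul' F K (Θ z)) * y := by
        conv_lhs => rw [hx]
        rw [hMR, hΨE]
      rw [h8, ← hΘmul' z, htoK] at h7
      exact h7
    have h9 : algebraMap A K (LinearMap.mul' O A z) ∈
        IsLocalization.coeSubmodule K (differentIdeal O A) := by
      rw [coeSubmodule_differentIdeal O F A, Submodule.mem_div_iff_forall_mul_mem]
      exact hy
    rw [IsLocalization.mem_coeSubmodule] at h9
    obtain ⟨b, hb, hbeq⟩ := h9
    rwa [← hKinj hbeq]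
  -- multiplication is A-linear for the left action
  have hsm : ∀ (p : A) (z : A ⊗[O] A),
      LinearMap.mul' O A (p • z) = p * LinearMap.mul' O A z := by
    intro p z
    induction z using TensorProduct.induction_on with
    | zero => rw [smul_zero, map_zero, mul_zero]
    | tmul x y =>
      rw [TensorProduct.smul_tmul', LinearMap.mul'_apply, LinearMap.mul'_apply, smul_eq_mul,
        mul_assoc]
    | add u v hu hv => rw [smul_add, map_add, hu, hv, map_add, mul_add]
  let T : Dsub O A →ₗ[A] differentIdeal O A :=
    { toFun := fun z => ⟨LinearMap.mul' O A z.1, hmem z.1 z.2⟩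
      map_add' := fun z w => by
        apply Subtype.ext
        show LinearMap.mul' O A (z.1 + w.1) = LinearMap.mul' O A z.1 + LinearMap.mul' O A w.1
        rw [map_add]
      map_smul' := fun p z => by
        apply Subtype.ext
        show LinearMap.mul' O A (p • z.1) = p • LinearMap.mul' O A z.1
        rw [hsm, smul_eq_mul] }
  have hTinj : Function.Injective T := by
    intro z w h
    have h2 : LinearMap.mul' O A z.1 = LinearMap.mul' O A w.1 := congrArg Subtype.val h
    apply Subtype.ext
    apply hΘinj
    rw [hkey (Θ z.1) (hdiagz z.1 z.2), hkey (Θ w.1) (hdiagz w.1 w.2), ← hΘmul', ← hΘmul', h2]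
  have hTsurj : Function.Surjective T := by
    rintro ⟨b, hb⟩
    have hbK : ∀ j, ∃ β : A, toK β = algebraMap A K b * c j := by
      intro j
      have h1 : algebraMap A K b ∈ IsLocalization.coeSubmodule K (differentIdeal O A) :=
        (IsLocalization.mem_coeSubmodule K (differentIdeal O A)).mpr ⟨b, hb, rfl⟩
      rw [coeSubmodule_differentIdeal O F A, Submodule.mem_div_iff_forall_mul_mem] at h1
      have h2 := h1 (c j) (hcdual j)
      rw [Submodule.one_eq_range] at h2
      obtain ⟨β, hβ⟩ := h2
      exact ⟨β, hβ⟩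
    choose β hβ using hbK
    set z : A ⊗[O] A := ∑ j, β j ⊗ₜ[O] a j with hzdef
    have hΘz : Θ z = ((algebraMap A K b) ⊗ₜ[F] (1 : K)) * E := by
      rw [hzdef, map_sum, hEdef, Finset.mul_sum]
      refine Finset.sum_congr rfl fun j _ => ?_
      rw [hΘt, hβ j, Algebra.TensorProduct.tmul_mul_tmul, one_mul]
    have hone : toK (1 : A) = (1 : K) := by rw [htoK, map_one]
    have hzD : z ∈ Dsub O A := by
      intro p
      apply hΘinj
      rw [hΘsmul, hΘmul, hone, hΘz]
      have e1 : (toK p ⊗ₜ[F] (1 : K)) * ((algebraMap A K b ⊗ₜ[F] (1 : K)) * E)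
          = (algebraMap A K b ⊗ₜ[F] (1 : K)) * ((toK p ⊗ₜ[F] (1 : K)) * E) := by ring
      have e2 : (algebraMap A K b ⊗ₜ[F] (1 : K)) * (((1 : K) ⊗ₜ[F] toK p) * E)
          = ((1 : K) ⊗ₜ[F] toK p) * ((algebraMap A K b ⊗ₜ[F] (1 : K)) * E) := by ring
      rw [e1, hdiag (toK p), e2]
    refine ⟨⟨z, hzD⟩, ?_⟩
    apply Subtype.ext
    show LinearMap.mul' O A z = b
    apply hKinj
    have h10 : toK (LinearMap.mul' O A z) = algebraMap A K b := by
      rw [hΘmul' z, hΘz, hmul'L, hmE, mul_one, mul_one]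
    rw [← htoK]
    exact h10
  exact ⟨LinearEquiv.ofBijective T ⟨hTinj, hTsurj⟩, fun x => rfl⟩
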